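/- Let γ > 0 and let L : ℝ^m → ℝ be continuous and nonnegative. Then for every R > 0, sup over θ with ‖θ‖ ≤ R of the Frobenius norm ‖Σ_θ‖_F of the covariance matrix of the density p_θ is finite; i.e., the covariance of the EntropySGD local measure is uniformly bounded on every bounded set of parameters. -/

import Mathlib

open MeasureTheory

lemma integrable_rexp_gauss (m : ℕ) {b : ℝ} (hb : 0 < b) :
    Integrable (fun v : EuclideanSpace ℝ (Fin m) ↦ Real.exp (-b * ‖v‖ ^ 2)) := by
  have h := (GaussianFourier.integrable_cexp_neg_mul_sq_norm_add
    (V := EuclideanSpace ℝ (Fin m)) (b := (b : ℂ)) (by simpa) 0 0).norm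
  convert h using 2 with v
  simp [Complex.norm_exp, ← Complex.ofReal_pow]

lemma poly_gauss_bound {c t : ℝ} (hc : 0 < c) :
    (1 + t ^ 2) * Real.exp (-(2 * c) * t ^ 2) ≤ (1 + 1 / c) * Real.exp (-c * t ^ 2) := by
  have h2 : (1 + t ^ 2) ≤ (1 + 1 / c) * Real.exp (c * t ^ 2) := by
    have he : (1 : ℝ) ≤ Real.exp (c * t ^ 2) := Real.one_le_exp (by positivity)
    have ht : t ^ 2 ≤ (1 / c) * Real.exp (c * t ^ 2) := by
      rw [div_mul_eq_mul_div, le_div_iff₀ hc]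
      have h0 : c * t ^ 2 + 1 ≤ Real.exp (c * t ^ 2) := Real.add_one_le_exp _
      linarith
    nlinarith
  have h3 : Real.exp (-(2 * c) * t ^ 2) = Real.exp (-c * t ^ 2) / Real.exp (c * t ^ 2) := by
    rw [← Real.exp_sub]; ring_nf
  rw [h3]
  calc (1 + t ^ 2) * (Real.exp (-c * t ^ 2) / Real.exp (c * t ^ 2))
      ≤ ((1 + 1 / c) * Real.exp (c * t ^ 2)) *
          (Real.exp (-c * t ^ 2) / Real.exp (c * t ^ 2)) :=
        mul_le_mul_of_nonneg_right h2 (by positivity)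
    _ = (1 + 1 / c) * Real.exp (-c * t ^ 2) := by field_simp

lemma coord_le_norm {m : ℕ} (x : EuclideanSpace ℝ (Fin m)) (i : Fin m) : |x i| ≤ ‖x‖ := by
  rw [EuclideanSpace.norm_eq, ← Real.sqrt_sq_eq_abs]
  apply Real.sqrt_le_sqrt
  have := Finset.single_le_sum (f := fun j => ‖x j‖ ^ 2)
    (fun j _ => by positivity) (Finset.mem_univ i)
  simpa [Real.norm_eq_abs, sq_abs] using this

/-- The EntropySGD normalization `Z(θ) = ∫ exp(−L(θ') − (γ/2)‖θ−θ'‖²) dθ'`. -/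
noncomputable def entropyZ (m : ℕ) (γ : ℝ) (L : EuclideanSpace ℝ (Fin m) → ℝ)
    (θ : EuclideanSpace ℝ (Fin m)) : ℝ :=
  ∫ θ' : EuclideanSpace ℝ (Fin m), Real.exp (-L θ' - γ / 2 * ‖θ - θ'‖ ^ 2)

/-- The probability density `p_θ(θ') = exp(−L(θ') − (γ/2)‖θ−θ'‖²)/Z(θ)`. -/
noncomputable def entropyPdf (m : ℕ) (γ : ℝ) (L : EuclideanSpace ℝ (Fin m) → ℝ)
    (θ θ' : EuclideanSpace ℝ (Fin m)) : ℝ :=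
  Real.exp (-L θ' - γ / 2 * ‖θ - θ'‖ ^ 2) / entropyZ m γ L θ

/-- The mean `μ(θ) = ∫ θ' p_θ(θ') dθ'` of the density `p_θ`. -/
noncomputable def entropyMean (m : ℕ) (γ : ℝ) (L : EuclideanSpace ℝ (Fin m) → ℝ)
    (θ : EuclideanSpace ℝ (Fin m)) : EuclideanSpace ℝ (Fin m) :=
  ∫ θ' : EuclideanSpace ℝ (Fin m), entropyPdf m γ L θ θ' • θ'

/-- The covariance matrix `(Σ_θ)_{ij} = E_{p_θ}[θ'_i θ'_j] − μ_i(θ)μ_j(θ)`. -/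
noncomputable def entropyCov (m : ℕ) (γ : ℝ) (L : EuclideanSpace ℝ (Fin m) → ℝ)
    (θ : EuclideanSpace ℝ (Fin m)) : Matrix (Fin m) (Fin m) ℝ :=
  Matrix.of fun i j =>
    (∫ θ' : EuclideanSpace ℝ (Fin m), θ' i * θ' j * entropyPdf m γ L θ θ') -
      entropyMean m γ L θ i * entropyMean m γ L θ j

/-- The Frobenius norm `‖A‖_F = √(Σ_{ij} A_{ij}²)` of a real matrix. -/
noncomputable def frobeniusNorm' (m : ℕ) (A : Matrix (Fin m) (Fin m) ℝ) : ℝ :=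
  Real.sqrt (∑ i, ∑ j, A i j ^ 2)

/-- For `γ > 0` and `L` continuous and nonnegative, the Frobenius norm
of the covariance `Σ_θ` of the EntropySGD local measure `p_θ` is uniformly bounded
on every bounded set of parameters: for every `R > 0` the supremum of
`‖Σ_θ‖_F` over `‖θ‖ ≤ R` is finite. -/
theorem entropySGD_cov_bounded (m : ℕ) (γ : ℝ) (hγ : 0 < γ)
    (L : EuclideanSpace ℝ (Fin m) → ℝ) (hLc : Continuous L) (hLnn : ∀ θ', 0 ≤ L θ') :
    ∀ R : ℝ, 0 < R → ∃ s : ℝ, ∀ θ : EuclideanSpace ℝ (Fin m), ‖θ‖ ≤ R →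
      frobeniusNorm' m (entropyCov m γ L θ) ≤ s := by
  intro R hR
  obtain ⟨x₀, _, hx₀max'⟩ :=
    (isCompact_closedBall (0 : EuclideanSpace ℝ (Fin m)) R).exists_isMaxOn
      ⟨0, Metric.mem_closedBall_self hR.le⟩ hLc.continuousOn
  have hx₀max : ∀ x ∈ Metric.closedBall (0 : EuclideanSpace ℝ (Fin m)) R, L x ≤ L x₀ :=
    fun x hx => hx₀max' hx
  set M := L x₀ with hM
  set D : ℝ := Real.exp (γ * R ^ 2 / 2) * (1 + 8 / γ) with hD
  set g : EuclideanSpace ℝ (Fin m) → ℝ := fun θ' => D * Real.exp (-(γ / 8) * ‖θ'‖ ^ 2) with hg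
  have hg_int : Integrable g := (integrable_rexp_gauss m (by positivity)).const_mul D
  set A := ∫ θ', g θ' with hA
  have hA0 : 0 ≤ A := integral_nonneg fun θ' => by rw [hg]; positivity
  set B := Real.exp (-(M + 2 * γ * R ^ 2)) *
    (volume (Metric.ball (0 : EuclideanSpace ℝ (Fin m)) R)).toReal with hB
  have hvol_pos : 0 < (volume (Metric.ball (0 : EuclideanSpace ℝ (Fin m)) R)).toReal :=
    ENNReal.toReal_pos (Metric.measure_ball_pos volume 0 hR).ne' measure_ball_lt_top.ne
  have hB0 : 0 < B := by positivity
  set K0 := A / B with hK0def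
  have hK00 : 0 ≤ K0 := div_nonneg hA0 hB0.le
  refine ⟨m * (K0 + K0 ^ 2), ?_⟩
  intro θ hθ
  set E : EuclideanSpace ℝ (Fin m) → ℝ :=
    fun θ' => Real.exp (-L θ' - γ / 2 * ‖θ - θ'‖ ^ 2) with hEdef
  have hE_pos : ∀ θ', 0 < E θ' := fun θ' => Real.exp_pos _
  have key : ∀ θ', (1 + ‖θ'‖ ^ 2) * E θ' ≤ g θ' := by
    intro θ'
    have hn : ‖θ'‖ ≤ R + ‖θ - θ'‖ := by
      calc ‖θ'‖ = ‖θ - (θ - θ')‖ := by rw [sub_sub_cancel]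
        _ ≤ ‖θ‖ + ‖θ - θ'‖ := norm_sub_le _ _
        _ ≤ R + ‖θ - θ'‖ := by linarith
    have ht2 : ‖θ'‖ ^ 2 ≤ 2 * R ^ 2 + 2 * ‖θ - θ'‖ ^ 2 := by
      have := pow_le_pow_left₀ (norm_nonneg θ') hn 2
      nlinarith [sq_nonneg (R - ‖θ - θ'‖)]
    have h1 : E θ' ≤ Real.exp (γ * R ^ 2 / 2) * Real.exp (-(γ / 4) * ‖θ'‖ ^ 2) := by
      rw [hEdef, ← Real.exp_add]
      apply Real.exp_le_exp.2
      have hL := hLnn θ'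
      have := mul_le_mul_of_nonneg_left ht2 (by positivity : (0:ℝ) ≤ γ / 4)
      linarith
    have h2 : (1 + ‖θ'‖ ^ 2) * Real.exp (-(γ / 4) * ‖θ'‖ ^ 2) ≤
        (1 + 8 / γ) * Real.exp (-(γ / 8) * ‖θ'‖ ^ 2) := by
      have h := poly_gauss_bound (c := γ / 8) (t := ‖θ'‖) (by positivity)
      rw [show -(2 * (γ / 8)) = -(γ / 4) by ring, show (1 : ℝ) / (γ / 8) = 8 / γ from
        one_div_div γ 8] at h
      exact h
    calc (1 + ‖θ'‖ ^ 2) * E θ'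
        ≤ (1 + ‖θ'‖ ^ 2) * (Real.exp (γ * R ^ 2 / 2) * Real.exp (-(γ / 4) * ‖θ'‖ ^ 2)) :=
          mul_le_mul_of_nonneg_left h1 (by positivity)
      _ = Real.exp (γ * R ^ 2 / 2) * ((1 + ‖θ'‖ ^ 2) * Real.exp (-(γ / 4) * ‖θ'‖ ^ 2)) := by
          ring
      _ ≤ Real.exp (γ * R ^ 2 / 2) * ((1 + 8 / γ) * Real.exp (-(γ / 8) * ‖θ'‖ ^ 2)) :=
          mul_le_mul_of_nonneg_left h2 (Real.exp_pos _).le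
      _ = g θ' := by rw [hg, hD]; ring
  have hE_cont : Continuous E := by
    apply Real.continuous_exp.comp
    exact hLc.neg.sub (continuous_const.mul ((continuous_const.sub continuous_id).norm.pow 2))
  have h1E_cont : Continuous fun θ' => (1 + ‖θ'‖ ^ 2) * E θ' :=
    (continuous_const.add (continuous_norm.pow 2)).mul hE_cont
  have h1E_int : Integrable (fun θ' => (1 + ‖θ'‖ ^ 2) * E θ') := by
    apply hg_int.mono' h1E_cont.aestronglyMeasurable
    apply Filter.Eventually.of_forall
    intro θ'
    rw [Real.norm_eq_abs, abs_of_nonneg (by positivity)]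
    exact key θ'
  have hE_int : Integrable E := by
    apply h1E_int.mono' hE_cont.aestronglyMeasurable
    apply Filter.Eventually.of_forall
    intro θ'
    rw [Real.norm_eq_abs, abs_of_nonneg (hE_pos θ').le]
    nlinarith [hE_pos θ', sq_nonneg ‖θ'‖]
  have hZ_eq : entropyZ m γ L θ = ∫ θ', E θ' := rfl
  have hZ_ge : B ≤ entropyZ m γ L θ := by
    rw [hZ_eq]
    have step1 : ∫ θ' in Metric.ball (0 : EuclideanSpace ℝ (Fin m)) R, E θ' ≤ ∫ θ', E θ' :=
      setIntegral_le_integral hE_int (Filter.Eventually.of_forall fun θ' => (hE_pos θ').le)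
    have step2 : ∫ _θ' in Metric.ball (0 : EuclideanSpace ℝ (Fin m)) R,
        Real.exp (-(M + 2 * γ * R ^ 2)) ≤
        ∫ θ' in Metric.ball (0 : EuclideanSpace ℝ (Fin m)) R, E θ' := by
      apply setIntegral_mono_on
      · exact integrableOn_const measure_ball_lt_top.ne
      · exact hE_int.integrableOn
      · exact measurableSet_ball
      · intro x hx
        have hLx : L x ≤ M := hx₀max x (Metric.ball_subset_closedBall hx)
        have hxR : ‖x‖ < R := mem_ball_zero_iff.1 hx
        have hnx : ‖θ - x‖ ≤ 2 * R := by
          calc ‖θ - x‖ ≤ ‖θ‖ + ‖x‖ := norm_sub_le _ _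
            _ ≤ 2 * R := by linarith
        apply Real.exp_le_exp.2
        have ha2 : ‖θ - x‖ ^ 2 ≤ 4 * R ^ 2 := by nlinarith [norm_nonneg (θ - x)]
        have := mul_le_mul_of_nonneg_left ha2 (by positivity : (0:ℝ) ≤ γ / 2)
        linarith
    have step3 : ∫ _θ' in Metric.ball (0 : EuclideanSpace ℝ (Fin m)) R,
        Real.exp (-(M + 2 * γ * R ^ 2)) = B := by
      rw [setIntegral_const, hB, smul_eq_mul, measureReal_def]; ring
    linarith
  have hZ_pos : 0 < entropyZ m γ L θ := lt_of_lt_of_le hB0 hZ_ge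
  set Z := entropyZ m γ L θ with hZdef
  set N := ∫ θ', (1 + ‖θ'‖ ^ 2) * E θ' with hN
  have hN0 : 0 ≤ N :=
    integral_nonneg fun θ' => mul_nonneg (by positivity) (hE_pos θ').le
  have hNA : N ≤ A := integral_mono h1E_int hg_int key
  have hpdf_eq : ∀ θ', entropyPdf m γ L θ θ' = E θ' / Z := fun θ' => rfl
  have hpdf_nonneg : ∀ θ', 0 ≤ entropyPdf m γ L θ θ' := fun θ' =>
    div_nonneg (hE_pos θ').le hZ_pos.le
  set K := N / Z with hK
  have hKK0 : K ≤ K0 := div_le_div₀ hA0 hNA hB0 hZ_ge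
  have hK_nonneg : 0 ≤ K := div_nonneg hN0 hZ_pos.le
  have hfun_eq : (fun θ' => (1 + ‖θ'‖ ^ 2) * entropyPdf m γ L θ θ') =
      fun θ' => ((1 + ‖θ'‖ ^ 2) * E θ') / Z := by
    funext θ'
    rw [hpdf_eq θ', mul_div_assoc]
  have hInt1P : Integrable (fun θ' => (1 + ‖θ'‖ ^ 2) * entropyPdf m γ L θ θ') := by
    rw [hfun_eq]
    exact h1E_int.div_const Z
  have hIntP_eq : ∫ θ', (1 + ‖θ'‖ ^ 2) * entropyPdf m γ L θ θ' = K := by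
    rw [hfun_eq, integral_div]
  have hmean : ∀ i, |entropyMean m γ L θ i| ≤ K := by
    intro i
    refine (coord_le_norm _ i).trans ?_
    refine (norm_integral_le_integral_norm _).trans ?_
    rw [← hIntP_eq]
    apply integral_mono_of_nonneg
      (Filter.Eventually.of_forall fun θ' => norm_nonneg _) hInt1P
    apply Filter.Eventually.of_forall
    intro θ'
    dsimp only
    rw [norm_smul, Real.norm_eq_abs, abs_of_nonneg (hpdf_nonneg θ'), mul_comm]
    have ht : ‖θ'‖ ≤ 1 + ‖θ'‖ ^ 2 := by nlinarith [norm_nonneg θ', sq_nonneg (‖θ'‖ - 1)]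
    exact mul_le_mul_of_nonneg_right ht (hpdf_nonneg θ')
  have hsec : ∀ i j, |∫ θ', θ' i * θ' j * entropyPdf m γ L θ θ'| ≤ K := by
    intro i j
    have h1 : |∫ θ', θ' i * θ' j * entropyPdf m γ L θ θ'| ≤
        ∫ θ', |θ' i * θ' j * entropyPdf m γ L θ θ'| := by
      have := norm_integral_le_integral_norm
        (μ := volume) (fun θ' => θ' i * θ' j * entropyPdf m γ L θ θ')
      simp only [Real.norm_eq_abs] at this
      exact this
    refine h1.trans ?_
    rw [← hIntP_eq]
    apply integral_mono_of_nonneg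
      (Filter.Eventually.of_forall fun θ' => abs_nonneg _) hInt1P
    apply Filter.Eventually.of_forall
    intro θ'
    dsimp only
    rw [abs_mul, abs_mul, abs_of_nonneg (hpdf_nonneg θ')]
    have h1 := coord_le_norm θ' i
    have h2 := coord_le_norm θ' j
    have hij : |θ' i| * |θ' j| ≤ 1 + ‖θ'‖ ^ 2 := by
      nlinarith [abs_nonneg (θ' i), abs_nonneg (θ' j), norm_nonneg θ']
    exact mul_le_mul_of_nonneg_right hij (hpdf_nonneg θ')
  have hentry : ∀ i j, |entropyCov m γ L θ i j| ≤ K0 + K0 ^ 2 := by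
    intro i j
    have he : entropyCov m γ L θ i j =
        (∫ θ', θ' i * θ' j * entropyPdf m γ L θ θ') -
          entropyMean m γ L θ i * entropyMean m γ L θ j := rfl
    rw [he]
    have habs : |(∫ θ', θ' i * θ' j * entropyPdf m γ L θ θ') -
        entropyMean m γ L θ i * entropyMean m γ L θ j| ≤
        |∫ θ', θ' i * θ' j * entropyPdf m γ L θ θ'| +
        |entropyMean m γ L θ i * entropyMean m γ L θ j| := abs_sub _ _
    refine habs.trans ?_
    have h2 : |entropyMean m γ L θ i * entropyMean m γ L θ j| ≤ K * K := by
      rw [abs_mul]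
      exact mul_le_mul (hmean i) (hmean j) (abs_nonneg _) hK_nonneg
    have h3 : K * K ≤ K0 ^ 2 := by
      rw [sq]
      exact mul_le_mul hKK0 hKK0 hK_nonneg hK00
    have h4 := hsec i j
    linarith
  rw [frobeniusNorm']
  have hsum : ∑ i, ∑ j, entropyCov m γ L θ i j ^ 2 ≤
      ∑ _i : Fin m, ∑ _j : Fin m, (K0 + K0 ^ 2) ^ 2 := by
    apply Finset.sum_le_sum
    intro i _
    apply Finset.sum_le_sum
    intro j _
    have h := abs_le.1 (hentry i j)
    exact sq_le_sq' h.1 h.2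
  calc Real.sqrt (∑ i, ∑ j, entropyCov m γ L θ i j ^ 2)
      ≤ Real.sqrt (∑ _i : Fin m, ∑ _j : Fin m, (K0 + K0 ^ 2) ^ 2) := Real.sqrt_le_sqrt hsum
    _ = Real.sqrt ((m * (K0 + K0 ^ 2)) ^ 2) := by
        rw [Finset.sum_const, Finset.sum_const, Finset.card_univ, Fintype.card_fin,
          smul_smul, nsmul_eq_mul]
        congr 1
        push_cast
        ring
    _ = m * (K0 + K0 ^ 2) := Real.sqrt_sq (by positivity)
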